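/- Let k ⊆ L be a field extension with char k = 0, and F₁,...,Fₘ ∈ k[X₁,...,Xₘ]. Suppose there exist A₁,...,Aₘ ∈ L[X₁,...,Xₘ] with Fᵢ(A₁,...,Aₘ) = Xᵢ and Aᵢ(F₁,...,Fₘ) = Xᵢ for all i. Then Aᵢ ∈ k[X₁,...,Xₘ] for all i. -/

import Mathlib

open MvPolynomial

/-- If `F₁,...,Fₘ ∈ k[X₁,...,Xₘ]` admit polynomial inverses `A₁,...,Aₘ` with
coefficients in an extension field `L ⊇ k`, then each `Aᵢ` lies in `k[X₁,...,Xₘ]`. -/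
theorem stmt14 (k L : Type*) [Field k] [Field L] [CharZero k] [Algebra k L] (m : ℕ)
    (F : Fin m → MvPolynomial (Fin m) k) (A : Fin m → MvPolynomial (Fin m) L)
    (hFA : ∀ i, aeval A (map (algebraMap k L) (F i)) = X i)
    (hAF : ∀ i, aeval (fun j => map (algebraMap k L) (F j)) (A i) = X i) :
    ∀ i, ∃ A₀ : MvPolynomial (Fin m) k, A i = map (algebraMap k L) A₀ := by
  set f : k →+* L := algebraMap k L with hf
  set F' : Fin m → MvPolynomial (Fin m) L := fun j => map f (F j) with hF'
  obtain ⟨π, hπ⟩ := LinearMap.exists_leftInverse_of_injective (Algebra.linearMap k L)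
    (LinearMap.ker_eq_bot.mpr (algebraMap k L).injective)
  have hπ1 : ∀ c : k, π (f c) = c := fun c => LinearMap.congr_fun hπ c
  -- coefficientwise retraction
  set T : MvPolynomial (Fin m) L → MvPolynomial (Fin m) k :=
    fun p => AddMonoidAlgebra.ofCoeff (Finsupp.mapRange π (map_zero π) (AddMonoidAlgebra.coeff p)) with hT
  have hTcoeff : ∀ (p : MvPolynomial (Fin m) L) u, coeff u (T p) = π (coeff u p) :=
    fun p u => Finsupp.mapRange_apply (f := π) (hf := map_zero π) (g := AddMonoidAlgebra.coeff p) (a := u)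
  have hTmap : ∀ q : MvPolynomial (Fin m) k, T (map f q) = q := by
    intro q; ext u; rw [hTcoeff, coeff_map, hπ1]
  have hTCmul : ∀ (e : L) (q : MvPolynomial (Fin m) k), T (C e * map f q) = π e • q := by
    intro e q; ext u
    have h1 : e * f (coeff u q) = coeff u q • e := by
      simp [Algebra.smul_def, mul_comm, hf]
    rw [hTcoeff, coeff_C_mul, coeff_map, coeff_smul, h1, map_smul, smul_eq_mul, smul_eq_mul,
      mul_comm]
  have hTadd : ∀ p q : MvPolynomial (Fin m) L, T (p + q) = T p + T q := by
    intro p q; ext u; rw [hTcoeff, coeff_add, coeff_add, hTcoeff, hTcoeff, map_add]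
  -- map commutes with aeval
  have hmapaeval : ∀ q : MvPolynomial (Fin m) k,
      aeval F' (map f q) = map f (aeval F q) := by
    intro q
    have h1 : aeval F' (map f q)
        = aeval (R := k) F' q := by
      simp only [aeval_def, hf, eval₂_map]
      rfl
    have h3 : ∀ p : MvPolynomial (Fin m) k,
        (mapAlgHom (σ := Fin m) (Algebra.ofId k L)) p = map f p := fun p => rfl
    have h2 := comp_aeval_apply (f := F) (mapAlgHom (σ := Fin m) (Algebra.ofId k L)) q
    rw [h3] at h2
    rw [h1, h2]
    rfl
  -- key intertwining
  have hkey : ∀ p : MvPolynomial (Fin m) L, T (aeval F' p) = aeval F (T p) := by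
    intro p
    induction p using MvPolynomial.induction_on' with
    | monomial u e =>
      have hmon : (monomial u e : MvPolynomial (Fin m) L) = C e * map f (monomial u 1) := by
        rw [map_monomial, map_one, C_mul_monomial, mul_one]
      rw [hmon, map_mul, aeval_C, algebraMap_eq, hmapaeval, hTCmul, hTCmul, map_smul]
    | add p q hp hq =>
      rw [map_add, hTadd, hTadd, map_add, hp, hq]
  -- injectivity of aeval F'
  have hinv : ∀ p : MvPolynomial (Fin m) L, aeval A (aeval F' p) = p := by
    intro p
    have : (bind₁ A) ((bind₁ F') p) = (bind₁ fun i => bind₁ A (F' i)) p := bind₁_bind₁ _ _ _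
    have h4 : (fun i => bind₁ A (F' i)) = (X : Fin m → MvPolynomial (Fin m) L) := by
      funext i; exact hFA i
    calc aeval A (aeval F' p) = (bind₁ fun i => bind₁ A (F' i)) p := this
      _ = p := by rw [h4]; exact AlgHom.congr_fun bind₁_X_left p
  intro i
  refine ⟨T (A i), ?_⟩
  have : aeval F' (A i) = aeval F' (map f (T (A i))) := by
    rw [hAF i, hmapaeval, ← hkey, hAF i]
    rw [show (X i : MvPolynomial (Fin m) L) = map f (X i) by rw [map_X], hTmap, map_X]
  calc A i = aeval A (aeval F' (A i)) := (hinv _).symm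
    _ = aeval A (aeval F' (map f (T (A i)))) := by rw [this]
    _ = map f (T (A i)) := hinv _
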